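/- With the notation of the context, for every particle array v ∈ Z^{T·M} one has (π⊗Φ)(v) = M^T · ψ̄(v) · b(𝟏 | v); that is, the density of a path drawn from π together with companion particles generated by the conditional SMC algorithm equals M^T times the density of the unconditional particle filter reweighted by its normalising-constant estimator, multiplied by the backward-sampling probability of the conditioned path. -/

import Mathlib

open MeasureTheory Finset

set_option maxHeartbeats 1600000

namespace SSM12

variable {Z : Type*}

/-- The path `v^{(k)}` extracted from the particle array `v`. -/
def pathOf (n m : ℕ) (v : Fin (n + 1) → Fin (m + 1) → Z)
    (k : Fin (n + 1) → Fin (m + 1)) : Fin (n + 1) → Z := fun t => v t (k t)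

/-- The constant index path `𝟏`. -/
def onePath (n m : ℕ) : Fin (n + 1) → Fin (m + 1) := fun _ => 0

/-- The unnormalised target density
`γ(z) = m(z_1) ∏_{t=2}^T f(z_{t-1},z_t) · ∏_{t=1}^T w_t(z_t)` with `T = n+1`. -/
noncomputable def gammaSSM (n : ℕ) (m₀ : Z → ℝ) (f : Z → Z → ℝ)
    (w : Fin (n + 1) → Z → ℝ) (z : Fin (n + 1) → Z) : ℝ :=
  m₀ (z 0) * (∏ t : Fin n, f (z t.castSucc) (z t.succ)) * ∏ t, w t (z t)

/-- The backward-sampling probabilities `b(k|v)`. -/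
noncomputable def bBack (n m : ℕ) (f : Z → Z → ℝ) (w : Fin (n + 1) → Z → ℝ)
    (k : Fin (n + 1) → Fin (m + 1)) (v : Fin (n + 1) → Fin (m + 1) → Z) : ℝ :=
  (w (Fin.last n) (v (Fin.last n) (k (Fin.last n))) /
      ∑ i, w (Fin.last n) (v (Fin.last n) i)) *
    ∏ t : Fin n,
      (w t.castSucc (v t.castSucc (k t.castSucc)) *
          f (v t.castSucc (k t.castSucc)) (v t.succ (k t.succ))) /
        ∑ i, w t.castSucc (v t.castSucc i) * f (v t.castSucc i) (v t.succ (k t.succ))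

/-- The particle-filter density `ψ(v)`. -/
noncomputable def psiPF (n m : ℕ) (m₀ : Z → ℝ) (f : Z → Z → ℝ)
    (w : Fin (n + 1) → Z → ℝ) (v : Fin (n + 1) → Fin (m + 1) → Z) : ℝ :=
  (∏ i, m₀ (v 0 i)) *
    ∏ t : Fin n, ∏ i : Fin (m + 1),
      (∑ j, w t.castSucc (v t.castSucc j) * f (v t.castSucc j) (v t.succ i)) /
        ∑ j, w t.castSucc (v t.castSucc j)

/-- The normalising-constant estimator `Ĉ(v) = ∏_t M⁻¹ ∑_i w_t(v_t^{(i)})` with `M = m+1`. -/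
noncomputable def Chat (n m : ℕ) (w : Fin (n + 1) → Z → ℝ)
    (v : Fin (n + 1) → Fin (m + 1) → Z) : ℝ :=
  ∏ t, ((m : ℝ) + 1)⁻¹ * ∑ i, w t (v t i)

/-- The conditional-SMC density `(π⊗Φ)(v)`, with `π = γ/C`. -/
noncomputable def piPhi (n m : ℕ) (m₀ : Z → ℝ) (f : Z → Z → ℝ)
    (w : Fin (n + 1) → Z → ℝ) (C : ℝ) (v : Fin (n + 1) → Fin (m + 1) → Z) : ℝ :=
  (gammaSSM n m₀ f w (pathOf n m v (onePath n m)) / C) *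
    (∏ i ∈ univ.erase (0 : Fin (m + 1)), m₀ (v 0 i)) *
    ∏ t : Fin n, ∏ i ∈ univ.erase (0 : Fin (m + 1)),
      (∑ j, w t.castSucc (v t.castSucc j) * f (v t.castSucc j) (v t.succ i)) /
        ∑ j, w t.castSucc (v t.castSucc j)

private lemma field_key (a b c d e p s q r C M : ℝ) (hC : C ≠ 0) (hs : s ≠ 0)
    (hq : q ≠ 0) (hr : r ≠ 0) (hM : M ≠ 0) (nn : ℕ) :
    a * c * (d * e) / C * b * p
      = M ^ (nn + 1) * ((a * b) * ((s / q) * p) * ((M⁻¹) ^ (nn + 1) * (q * r)) / C) *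
          ((e / r) * ((d * c) / s)) := by
  simp only [inv_pow]
  field_simp

/-- For every particle array `v`,
`(π⊗Φ)(v) = M^T · ψ̄(v) · b(𝟏|v)` where `ψ̄ = ψ·Ĉ/C`, `T = n+1` and `M = m+1`. -/
theorem cSMC_unconditional_identity
    [MeasurableSpace Z] (ν : Measure Z) [SigmaFinite ν] (n m : ℕ)
    (m₀ : Z → ℝ) (f : Z → Z → ℝ) (w : Fin (n + 1) → Z → ℝ)
    (hm₀ : Measurable m₀) (hf : Measurable fun p : Z × Z => f p.1 p.2)
    (hw : ∀ t, Measurable (w t))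
    (hm₀pos : ∀ z, 0 < m₀ z) (hfpos : ∀ z z', 0 < f z z') (hwpos : ∀ t z, 0 < w t z)
    (C : ℝ)
    (hC : C = ∫ z, gammaSSM n m₀ f w z ∂(Measure.pi fun _ : Fin (n + 1) => ν))
    (hCpos : 0 < C)
    (hCint : Integrable (gammaSSM n m₀ f w) (Measure.pi fun _ : Fin (n + 1) => ν))
    (v : Fin (n + 1) → Fin (m + 1) → Z) :
    piPhi n m m₀ f w C v
      = ((m : ℝ) + 1) ^ (n + 1) * (psiPF n m m₀ f w v * Chat n m w v / C) *
          bBack n m f w (onePath n m) v := by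
  have hM : ((m:ℝ) + 1) ≠ 0 := by positivity
  have hCne : C ≠ 0 := hCpos.ne'
  have hW : ∀ t : Fin (n+1), (0:ℝ) < ∑ i, w t (v t i) :=
    fun t => Finset.sum_pos (fun i _ => hwpos _ _) univ_nonempty
  have hS : ∀ (t : Fin n) (i : Fin (m+1)),
      (0:ℝ) < ∑ j, w t.castSucc (v t.castSucc j) * f (v t.castSucc j) (v t.succ i) :=
    fun t i => Finset.sum_pos (fun j _ => mul_pos (hwpos _ _) (hfpos _ _)) univ_nonempty
  have hWP : (∏ t : Fin n, ∑ i, w t.castSucc (v t.castSucc i)) ≠ 0 :=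
    (Finset.prod_pos fun t _ => hW t.castSucc).ne'
  have hSP : (∏ t : Fin n,
      ∑ j, w t.castSucc (v t.castSucc j) * f (v t.castSucc j) (v t.succ 0)) ≠ 0 :=
    (Finset.prod_pos fun t _ => hS t 0).ne'
  simp only [piPhi, psiPF, Chat, bBack, gammaSSM, pathOf, onePath]
  rw [← Finset.mul_prod_erase univ (fun i => m₀ (v 0 i)) (mem_univ (0 : Fin (m+1)))]
  have h2 : (∏ t : Fin n, ∏ i : Fin (m+1),
      (∑ j, w t.castSucc (v t.castSucc j) * f (v t.castSucc j) (v t.succ i)) /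
        ∑ j, w t.castSucc (v t.castSucc j))
      = (∏ t : Fin n, (∑ j, w t.castSucc (v t.castSucc j) * f (v t.castSucc j) (v t.succ 0)) /
          ∑ j, w t.castSucc (v t.castSucc j)) *
        ∏ t : Fin n, ∏ i ∈ univ.erase (0 : Fin (m+1)),
          (∑ j, w t.castSucc (v t.castSucc j) * f (v t.castSucc j) (v t.succ i)) /
            ∑ j, w t.castSucc (v t.castSucc j) := by
    rw [← Finset.prod_mul_distrib]
    exact Finset.prod_congr rfl fun t _ =>
      (Finset.mul_prod_erase univ _ (mem_univ (0 : Fin (m+1)))).symm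
  rw [h2]
  rw [show (∏ t : Fin (n+1), (((m:ℝ)+1)⁻¹ * ∑ i, w t (v t i)))
      = (((m:ℝ)+1)⁻¹)^(n+1) * ∏ t : Fin (n+1), ∑ i, w t (v t i) by
    rw [Finset.prod_mul_distrib, Finset.prod_const, Finset.card_univ, Fintype.card_fin]]
  rw [Fin.prod_univ_castSucc (fun t : Fin (n+1) => ∑ i, w t (v t i)),
      Fin.prod_univ_castSucc (fun t : Fin (n+1) => w t (v t 0)),
      Finset.prod_div_distrib, Finset.prod_div_distrib, Finset.prod_mul_distrib]
  obtain ⟨M, hMM, hMne⟩ : ∃ M : ℝ, ((m:ℝ)+1) = M ∧ M ≠ 0 := ⟨_, rfl, hM⟩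
  rw [hMM]
  have hWl : (∑ i, w (Fin.last n) (v (Fin.last n) i)) ≠ 0 := (hW (Fin.last n)).ne'
  exact field_key _ _ _ _ _ _ _ _ _ _ _ hCne hSP hWP hWl hMne n

end SSM12
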